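/- Let X be a mixture set, n a positive integer, and ≽ a binary relation on X^n. If (u, w) and (u′, w′) both provide AA representations for ≽ on X^n, then there exist A > 0 and B ∈ ℝ such that u = Au′ + B, and there exists C > 0 such that w = Cw′. -/

import Mathlib

/-- A mixture set: a set `X` with an operation `mix x l y` (written `xλy` in the paper),
satisfying the Herstein–Milnor axioms for `l, m ∈ [0,1]`. -/
structure MixtureSpace (X : Type*) where
  mix : X → ℝ → X → X
  mix_one : ∀ x y : X, mix x 1 y = x
  mix_comm : ∀ (x y : X), ∀ l ∈ Set.Icc (0:ℝ) 1, mix x l y = mix y (1 - l) x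
  mix_assoc : ∀ (x y : X), ∀ l ∈ Set.Icc (0:ℝ) 1, ∀ m ∈ Set.Icc (0:ℝ) 1,
    mix (mix x m y) l y = mix x (l * m) y

/-- `u : X → ℝ` is mixture linear. -/
def MixtureSpace.linear {X : Type*} (M : MixtureSpace X) (u : X → ℝ) : Prop :=
  ∀ (x y : X), ∀ l ∈ Set.Icc (0:ℝ) 1, u (M.mix x l y) = l * u x + (1 - l) * u y

/-- Strict (asymmetric) part of a relation. -/
def strictP {α : Type*} (R : α → α → Prop) (x y : α) : Prop := R x y ∧ ¬ R y x

/-- Componentwise mixture of finite streams. -/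
def mixStream {X : Type*} (M : MixtureSpace X) {n : ℕ} (x : Fin n → X) (l : ℝ)
    (y : Fin n → X) : Fin n → X := fun t => M.mix (x t) l (y t)

/-- Componentwise mixture of infinite streams. -/
def mixSeq {X : Type*} (M : MixtureSpace X) (x : ℕ → X) (l : ℝ) (y : ℕ → X) :
    ℕ → X := fun t => M.mix (x t) l (y t)

/-! ### Finite-horizon axioms -/

/-- F1: weak order (complete and transitive). -/
def AxF1 {X : Type*} {n : ℕ} (R : (Fin n → X) → (Fin n → X) → Prop) : Prop :=
  (∀ x y, R x y ∨ R y x) ∧ Transitive R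

/-- F2: non-triviality (a ≻ b for some a, b in the induced relation). -/
def AxF2 {X : Type*} {n : ℕ} (R : (Fin n → X) → (Fin n → X) → Prop) : Prop :=
  ∃ a b : X, strictP R (fun _ => a) (fun _ => b)

/-- F3: mixture independence. -/
def AxF3 {X : Type*} (M : MixtureSpace X) {n : ℕ}
    (R : (Fin n → X) → (Fin n → X) → Prop) : Prop :=
  ∀ x y z : Fin n → X, ∀ l ∈ Set.Ioo (0:ℝ) 1,
    (R x y ↔ R (mixStream M x l z) (mixStream M y l z))

/-- F4: mixture continuity. -/
def AxF4 {X : Type*} (M : MixtureSpace X) {n : ℕ}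
    (R : (Fin n → X) → (Fin n → X) → Prop) : Prop :=
  ∀ x y z : Fin n → X,
    IsClosed {l : ℝ | l ∈ Set.Icc (0:ℝ) 1 ∧ R (mixStream M x l z) y} ∧
    IsClosed {l : ℝ | l ∈ Set.Icc (0:ℝ) 1 ∧ R y (mixStream M x l z)}

/-- F5: monotonicity. -/
def AxF5 {X : Type*} {n : ℕ} (R : (Fin n → X) → (Fin n → X) → Prop) : Prop :=
  ∀ x y : Fin n → X, (∀ t, R (fun _ => x t) (fun _ => y t)) → R x y

/-- `(u, w)` provides an AA representation for `R` on `X^n`. -/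
def AARep {X : Type*} (M : MixtureSpace X) {n : ℕ}
    (R : (Fin n → X) → (Fin n → X) → Prop) (u : X → ℝ) (w : Fin n → ℝ) : Prop :=
  M.linear u ∧ (∃ a b : X, u a ≠ u b) ∧ (∀ t, 0 ≤ w t) ∧ (∃ t, 0 < w t) ∧
  ∀ x y : Fin n → X, (R x y ↔ (∑ t, w t * u (x t)) ≥ ∑ t, w t * u (y t))

/-! ### Infinite-horizon notions -/

/-- Ultimately constant stream (equals `x0` from some period on). -/
def UltConst {X : Type*} (x0 : X) (x : ℕ → X) : Prop := ∃ T, ∀ t, T ≤ t → x t = x0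

/-- Member of `X**`: ultimately constant or constant. -/
def InXSS {X : Type*} (x0 : X) (x : ℕ → X) : Prop :=
  UltConst x0 x ∨ ∃ a, ∀ t, x t = a

/-- `[a]_k`: the stream with `a` in period `k` and `x0` elsewhere. -/
def bracket {X : Type*} (x0 : X) (a : X) (k : ℕ) : ℕ → X :=
  fun t => if t = k then a else x0

/-- `(x₁, …, x_{k−1}, a, x_{k+1}, …, x_T, x0, x0, …)`. -/
def truncMod {X : Type*} (x0 : X) (x : ℕ → X) (k : ℕ) (a : X) (T : ℕ) : ℕ → X :=
  fun t => if t = k then a else if t ≤ T then x t else x0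

/-- I1: weak order. -/
def AxI1 {X : Type*} (R : (ℕ → X) → (ℕ → X) → Prop) : Prop :=
  (∀ x y, R x y ∨ R y x) ∧ Transitive R

/-- I2: non-triviality `a ≻ x0 ≻ b` in the induced relation. -/
def AxI2 {X : Type*} (x0 : X) (R : (ℕ → X) → (ℕ → X) → Prop) : Prop :=
  ∃ a b : X, strictP R (fun _ => a) (fun _ => x0) ∧ strictP R (fun _ => x0) (fun _ => b)

/-- I3: mixture independence on `X**`. -/
def AxI3 {X : Type*} (M : MixtureSpace X) (x0 : X)
    (R : (ℕ → X) → (ℕ → X) → Prop) : Prop :=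
  ∀ x y z : ℕ → X, InXSS x0 x → InXSS x0 y → InXSS x0 z →
    ∀ l ∈ Set.Ioo (0:ℝ) 1, (R x y ↔ R (mixSeq M x l z) (mixSeq M y l z))

/-- I4: mixture continuity. -/
def AxI4 {X : Type*} (M : MixtureSpace X) (x0 : X)
    (R : (ℕ → X) → (ℕ → X) → Prop) : Prop :=
  ∀ x z : ℕ → X, InXSS x0 x → InXSS x0 z → ∀ y : ℕ → X,
    IsClosed {l : ℝ | l ∈ Set.Icc (0:ℝ) 1 ∧ R (mixSeq M x l z) y} ∧
    IsClosed {l : ℝ | l ∈ Set.Icc (0:ℝ) 1 ∧ R y (mixSeq M x l z)}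

/-- I5: monotonicity. -/
def AxI5 {X : Type*} (R : (ℕ → X) → (ℕ → X) → Prop) : Prop :=
  ∀ x y : ℕ → X, (∀ t, R (fun _ => x t) (fun _ => y t)) → R x y

/-- I6: convergence. -/
def AxI6 {X : Type*} (x0 : X) (R : (ℕ → X) → (ℕ → X) → Prop) : Prop :=
  ∀ (x : ℕ → X) (a : X) (k : ℕ),
    (strictP R (bracket x0 a k) (bracket x0 (x k) k) →
      ∃ Tp, k ≤ Tp ∧ ∀ T, Tp ≤ T → R (truncMod x0 x k a T) x) ∧
    (strictP R (bracket x0 (x k) k) (bracket x0 a k) →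
      ∃ Tm, k ≤ Tm ∧ ∀ T, Tm ≤ T → R x (truncMod x0 x k a T))

/-- `(u, w)` provides an AA representation for `R` on `X^∞` (with its
discounted-utility series converging for every stream). -/
def AARepInf {X : Type*} (M : MixtureSpace X)
    (R : (ℕ → X) → (ℕ → X) → Prop) (u : X → ℝ) (w : ℕ → ℝ) : Prop :=
  M.linear u ∧ (∃ a b : X, u a ≠ u b) ∧ (∀ t, 0 ≤ w t) ∧ (∃ t, 0 < w t) ∧
  ∃ U : (ℕ → X) → ℝ,
    (∀ x : ℕ → X, Filter.Tendsto (fun N => ∑ t ∈ Finset.range N, w t * u (x t))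
      Filter.atTop (nhds (U x))) ∧
    ∀ x y : ℕ → X, (R x y ↔ U x ≥ U y)

/-! ### Exponential discounting -/

/-- F2′: essentiality of period 1. -/
def AxF2' {X : Type*} {n : ℕ} (R : (Fin n → X) → (Fin n → X) → Prop)
    (h0 : 0 < n) : Prop :=
  ∃ (a b : X) (x : Fin n → X),
    strictP R (Function.update x ⟨0, h0⟩ a) (Function.update x ⟨0, h0⟩ b)

/-- F6: impatience. -/
def AxF6 {X : Type*} {n : ℕ} (R : (Fin n → X) → (Fin n → X) → Prop)
    (h0 : 0 < n) (h1 : 1 < n) : Prop :=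
  ∀ a b : X, strictP R (fun _ => a) (fun _ => b) →
    ∀ x : Fin n → X,
      strictP R (Function.update (Function.update x ⟨0, h0⟩ a) ⟨1, h1⟩ b)
               (Function.update (Function.update x ⟨0, h0⟩ b) ⟨1, h1⟩ a)

/-- `(x₂, …, xₙ, a)`. -/
def shiftApp {X : Type*} {n : ℕ} (x : Fin n → X) (a : X) : Fin n → X :=
  fun t => if h : (t : ℕ) + 1 < n then x ⟨(t : ℕ) + 1, h⟩ else a

/-- F7: stationarity. -/
def AxF7 {X : Type*} {n : ℕ} (R : (Fin n → X) → (Fin n → X) → Prop)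
    (h0 : 0 < n) : Prop :=
  ∀ (a : X) (x y : Fin n → X),
    (R (Function.update x ⟨0, h0⟩ a) (Function.update y ⟨0, h0⟩ a) ↔
     R (shiftApp x a) (shiftApp y a))

/-- `(u, δ)` provides an exponentially discounted expected utility representation. -/
def ExpRep {X : Type*} (M : MixtureSpace X) {n : ℕ}
    (R : (Fin n → X) → (Fin n → X) → Prop) (u : X → ℝ) (δ : ℝ) : Prop :=
  M.linear u ∧ (∃ a b : X, u a ≠ u b) ∧ δ ∈ Set.Ioo (0:ℝ) 1 ∧
  ∀ x y : Fin n → X,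
    (R x y ↔ (∑ t : Fin n, δ ^ (t : ℕ) * u (x t)) ≥ ∑ t : Fin n, δ ^ (t : ℕ) * u (y t))

/-- I2′: essentiality of period 1 (infinite horizon). -/
def AxI2' {X : Type*} (x0 : X) (R : (ℕ → X) → (ℕ → X) → Prop) : Prop :=
  ∃ a b : X, strictP R (bracket x0 a 0) (fun _ => x0) ∧
    strictP R (fun _ => x0) (bracket x0 b 0)

/-- `(a, x₁, x₂, …)`. -/
def consSeq {X : Type*} (a : X) (x : ℕ → X) : ℕ → X :=
  fun t => if t = 0 then a else x (t - 1)

/-- I7: stationarity (infinite horizon). -/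
def AxI7 {X : Type*} (R : (ℕ → X) → (ℕ → X) → Prop) : Prop :=
  ∀ (a : X) (x y : ℕ → X), (R (consSeq a x) (consSeq a y) ↔ R x y)

/-- `(u, δ)` provides an exponentially discounted expected utility representation
on `X^∞`, with converging series. -/
def ExpRepInf {X : Type*} (M : MixtureSpace X)
    (R : (ℕ → X) → (ℕ → X) → Prop) (u : X → ℝ) (δ : ℝ) : Prop :=
  M.linear u ∧ (∃ a b : X, u a ≠ u b) ∧ δ ∈ Set.Ioo (0:ℝ) 1 ∧
  ∃ U : (ℕ → X) → ℝ,
    (∀ x : ℕ → X, Filter.Tendsto (fun N => ∑ t ∈ Finset.range N, δ ^ t * u (x t))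
      Filter.atTop (nhds (U x))) ∧
    ∀ x y : ℕ → X, (R x y ↔ U x ≥ U y)

/-! ### Semi-hyperbolic discounting -/

/-- The SH(T) discount function at (1-based) period `t`:
`D 1 = 1`, `D t = β₁⋯β_{t−1} δ^{t−1}` for `2 ≤ t ≤ T`,
`D t = β₁⋯β_{T−1} δ^{t−1}` for `t > T`. -/
noncomputable def SHD (T : ℕ) (β : ℕ → ℝ) (δ : ℝ) (t : ℕ) : ℝ :=
  (∏ i ∈ Finset.Icc 1 (min t T - 1), β i) * δ ^ (t - 1)

/-- Parameter restrictions: `0 < β₁ ≤ … ≤ β_{T−1} ≤ 1` and `δ ∈ (0,1)`. -/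
def SHParams (T : ℕ) (β : ℕ → ℝ) (δ : ℝ) : Prop :=
  (∀ i : ℕ, 1 ≤ i → i ≤ T - 1 → 0 < β i ∧ β i ≤ 1) ∧
  (∀ i : ℕ, 1 ≤ i → i + 1 ≤ T - 1 → β i ≤ β (i + 1)) ∧
  δ ∈ Set.Ioo (0:ℝ) 1

/-- `(u, β, δ)` provides an SH(T) discounted expected utility representation on `X^n`. -/
def SHRep {X : Type*} (M : MixtureSpace X) {n : ℕ}
    (R : (Fin n → X) → (Fin n → X) → Prop)
    (T : ℕ) (β : ℕ → ℝ) (δ : ℝ) (u : X → ℝ) : Prop :=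
  M.linear u ∧ (∃ a b : X, u a ≠ u b) ∧ SHParams T β δ ∧
  ∀ x y : Fin n → X,
    (R x y ↔ (∑ s : Fin n, SHD T β δ ((s : ℕ) + 1) * u (x s)) ≥
      ∑ s : Fin n, SHD T β δ ((s : ℕ) + 1) * u (y s))

/-- F2″: essentiality of (1-based) periods `1, …, T`. -/
def AxF2'' {X : Type*} {n : ℕ} (R : (Fin n → X) → (Fin n → X) → Prop)
    (T : ℕ) (hTn : T ≤ n) : Prop :=
  ∃ (a b : X) (x : Fin n → X), ∀ i : ℕ, ∀ hi : i < T,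
    strictP R (Function.update x ⟨i, lt_of_lt_of_le hi hTn⟩ a)
             (Function.update x ⟨i, lt_of_lt_of_le hi hTn⟩ b)

/-- F6′: impatience between (1-based) periods `T` and `T+1`. -/
def AxF6' {X : Type*} {n : ℕ} (R : (Fin n → X) → (Fin n → X) → Prop)
    (T : ℕ) (h1 : T - 1 < n) (h2 : T < n) : Prop :=
  ∀ a b : X, strictP R (fun _ => a) (fun _ => b) →
    ∀ x : Fin n → X,
      strictP R (Function.update (Function.update x ⟨T-1, h1⟩ a) ⟨T, h2⟩ b)
               (Function.update (Function.update x ⟨T-1, h1⟩ b) ⟨T, h2⟩ a)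

/-- Delete (0-based) coordinate `i`, shift the rest left, and append `a` at the end. -/
def delIns {X : Type*} {n : ℕ} (x : Fin n → X) (i : ℕ) (a : X) : Fin n → X :=
  fun s => if (s : ℕ) < i then x s
    else if h : (s : ℕ) + 1 < n then x ⟨(s : ℕ) + 1, h⟩ else a

/-- F7′: stationarity from (1-based) period `T`. -/
def AxF7' {X : Type*} {n : ℕ} (R : (Fin n → X) → (Fin n → X) → Prop)
    (T : ℕ) (h1 : T - 1 < n) : Prop :=
  ∀ (a : X) (x y : Fin n → X), (∀ s : Fin n, (s : ℕ) < T - 1 → x s = y s) →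
    (R (Function.update x ⟨T-1, h1⟩ a) (Function.update y ⟨T-1, h1⟩ a) ↔
     R (delIns x (T-1) a) (delIns y (T-1) a))

/-- `(x₁, …, x_{t−2}, a, b, x_{t+2}, …, xₙ, x_{t−1})` where `i` is the 0-based
index of period `t` (so `i = t − 1`). -/
def ebShiftFin {X : Type*} {n : ℕ} (x : Fin n → X) (i : ℕ) (hi : i - 1 < n)
    (a b : X) : Fin n → X :=
  fun s => if (s : ℕ) < i - 1 then x s
    else if (s : ℕ) = i - 1 then a
    else if (s : ℕ) = i then b
    else if h : (s : ℕ) + 1 < n then x ⟨(s : ℕ) + 1, h⟩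
    else x ⟨i - 1, hi⟩

/-- F8: early bias. -/
def AxF8 {X : Type*} {n : ℕ} (R : (Fin n → X) → (Fin n → X) → Prop)
    (T : ℕ) (hTn : T < n) : Prop :=
  ∀ a b c d : X,
    strictP R (fun _ => a) (fun _ => c) → strictP R (fun _ => d) (fun _ => b) →
    ∀ x : Fin n → X, ∀ i : ℕ, ∀ hi1 : 1 ≤ i, ∀ hi2 : i ≤ T - 1,
      (R (Function.update (Function.update x ⟨i, by omega⟩ a) ⟨i+1, by omega⟩ b)
         (Function.update (Function.update x ⟨i, by omega⟩ c) ⟨i+1, by omega⟩ d) ∧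
       R (Function.update (Function.update x ⟨i, by omega⟩ c) ⟨i+1, by omega⟩ d)
         (Function.update (Function.update x ⟨i, by omega⟩ a) ⟨i+1, by omega⟩ b)) →
      R (ebShiftFin x i (by omega) a b) (ebShiftFin x i (by omega) c d)

/-- `(u, β, δ)` provides an SH(T) discounted expected utility representation on `X^∞`. -/
def SHRepInf {X : Type*} (M : MixtureSpace X)
    (R : (ℕ → X) → (ℕ → X) → Prop)
    (T : ℕ) (β : ℕ → ℝ) (δ : ℝ) (u : X → ℝ) : Prop :=
  M.linear u ∧ (∃ a b : X, u a ≠ u b) ∧ SHParams T β δ ∧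
  ∃ U : (ℕ → X) → ℝ,
    (∀ x : ℕ → X, Filter.Tendsto
      (fun N => ∑ t ∈ Finset.range N, SHD T β δ (t + 1) * u (x t))
      Filter.atTop (nhds (U x))) ∧
    ∀ x y : ℕ → X, (R x y ↔ U x ≥ U y)

/-- I2″: essentiality of (1-based) periods `1, …, T`. -/
def AxI2'' {X : Type*} (x0 : X) (R : (ℕ → X) → (ℕ → X) → Prop) (T : ℕ) : Prop :=
  ∃ a b : X, ∀ t : ℕ, t < T →
    strictP R (bracket x0 a t) (fun _ => x0) ∧ strictP R (fun _ => x0) (bracket x0 b t)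

/-- Delete (0-based) coordinate `i` of an infinite stream. -/
def delSeq {X : Type*} (x : ℕ → X) (i : ℕ) : ℕ → X :=
  fun t => if t < i then x t else x (t + 1)

/-- I7′: stationarity from (1-based) period `T`. -/
def AxI7' {X : Type*} (R : (ℕ → X) → (ℕ → X) → Prop) (T : ℕ) : Prop :=
  ∀ (a : X) (x y : ℕ → X), (∀ t, t < T - 1 → x t = y t) →
    (R (Function.update x (T-1) a) (Function.update y (T-1) a) ↔
     R (delSeq x (T-1)) (delSeq y (T-1)))

/-- `(x₁, …, x_{t−2}, a, b, x_{t+2}, …)` where `i = t − 1` (0-based index of period `t`). -/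
def ebShiftSeq {X : Type*} (x : ℕ → X) (i : ℕ) (a b : X) : ℕ → X :=
  fun s => if s < i - 1 then x s
    else if s = i - 1 then a
    else if s = i then b
    else x (s + 1)

/-- I8: early bias (infinite horizon). -/
def AxI8 {X : Type*} (R : (ℕ → X) → (ℕ → X) → Prop) (T : ℕ) : Prop :=
  ∀ a b c d : X,
    strictP R (fun _ => a) (fun _ => c) → strictP R (fun _ => d) (fun _ => b) →
    ∀ x : ℕ → X, ∀ i : ℕ, 1 ≤ i → i ≤ T - 1 →
      (R (Function.update (Function.update x i a) (i+1) b)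
         (Function.update (Function.update x i c) (i+1) d) ∧
       R (Function.update (Function.update x i c) (i+1) d)
         (Function.update (Function.update x i a) (i+1) b)) →
      R (ebShiftSeq x i a b) (ebShiftSeq x i c d)

/-- Uniqueness of the AA representation on `X^n`. -/
theorem aa_representation_finite_unique {X : Type*} (M : MixtureSpace X)
    (n : ℕ) (hn : 0 < n) (R : (Fin n → X) → (Fin n → X) → Prop)
    (u u' : X → ℝ) (w w' : Fin n → ℝ)
    (h : AARep M R u w) (h' : AARep M R u' w') :
    (∃ A > (0:ℝ), ∃ B : ℝ, ∀ x : X, u x = A * u' x + B) ∧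
    (∃ C > (0:ℝ), ∀ t : Fin n, w t = C * w' t) := by
  obtain ⟨hul, ⟨a0, b0, hab0⟩, hwn, ⟨t0, ht0⟩, hrep⟩ := h
  obtain ⟨hul', -, hwn', ⟨t0', ht0'⟩, hrep'⟩ := h'
  have hW : 0 < ∑ t, w t :=
    Finset.sum_pos' (fun t _ => hwn t) ⟨t0, Finset.mem_univ _, ht0⟩
  have hW' : 0 < ∑ t, w' t :=
    Finset.sum_pos' (fun t _ => hwn' t) ⟨t0', Finset.mem_univ _, ht0'⟩
  -- ordinal equivalence of u and u'
  have key : ∀ p q : X, (u p ≥ u q ↔ u' p ≥ u' q) := by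
    intro p q
    have h1 := hrep (fun _ => p) (fun _ => q)
    have h2 := hrep' (fun _ => p) (fun _ => q)
    simp only [← Finset.sum_mul] at h1 h2
    calc u p ≥ u q ↔ (∑ t, w t) * u p ≥ (∑ t, w t) * u q := (mul_le_mul_iff_right₀ hW).symm
      _ ↔ R (fun _ => p) (fun _ => q) := h1.symm
      _ ↔ (∑ t, w' t) * u' p ≥ (∑ t, w' t) * u' q := h2
      _ ↔ u' p ≥ u' q := mul_le_mul_iff_right₀ hW'
  have keylt : ∀ p q : X, u p < u q → u' p < u' q := by
    intro p q hpq
    by_contra hle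
    push_neg at hle
    exact absurd ((key p q).mpr hle) (not_le.mpr hpq)
  have keyeq : ∀ p q : X, u' p = u' q → u p = u q := by
    intro p q hpq
    exact le_antisymm ((key q p).mpr (le_of_eq hpq)) ((key p q).mpr (le_of_eq hpq.symm))
  obtain ⟨a, b, hab, hab'⟩ : ∃ a b : X, u b < u a ∧ u' b < u' a := by
    rcases lt_or_gt_of_ne hab0 with hlt | hgt
    · exact ⟨b0, a0, hlt, keylt _ _ hlt⟩
    · exact ⟨a0, b0, hgt, keylt _ _ hgt⟩
  have hd : (0:ℝ) < u' a - u' b := by linarith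
  constructor
  · -- Part 1 : cardinal uniqueness of u
    refine ⟨(u a - u b) / (u' a - u' b), div_pos (by linarith) hd,
      u b - ((u a - u b) / (u' a - u' b)) * u' b, ?_⟩
    intro x
    rcases le_or_gt (u' x) (u' a) with hxa | hxa
    · rcases le_or_gt (u' b) (u' x) with hbx | hbx
      · -- middle case
        set l : ℝ := (u' x - u' b) / (u' a - u' b) with hl_def
        have hl : l ∈ Set.Icc (0:ℝ) 1 :=
          ⟨div_nonneg (by linarith) hd.le, (div_le_one hd).mpr (by linarith)⟩
        have hy' : u' (M.mix a l b) = u' x := by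
          rw [hul' a b l hl, hl_def]
          field_simp
          ring
        have hy : u (M.mix a l b) = u x := keyeq _ _ hy'
        rw [hul a b l hl] at hy
        rw [← hy, hl_def]
        field_simp
        ring
      · -- u' x < u' b
        set l : ℝ := (u' b - u' x) / (u' a - u' x) with hl_def
        have he : (0:ℝ) < u' a - u' x := by linarith
        have hl : l ∈ Set.Icc (0:ℝ) 1 :=
          ⟨div_nonneg (by linarith) he.le, (div_le_one he).mpr (by linarith)⟩
        have h1l : (0:ℝ) < 1 - l := by
          have : l < 1 := (div_lt_one he).mpr (by linarith)
          linarith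
        have hy' : u' (M.mix a l x) = u' b := by
          rw [hul' a x l hl, hl_def]
          field_simp
          ring
        have hy : u (M.mix a l x) = u b := keyeq _ _ hy'
        rw [hul a x l hl] at hy
        have hid : (1 - l) * ((u a - u b) / (u' a - u' b) * u' x +
            (u b - (u a - u b) / (u' a - u' b) * u' b)) = u b - l * u a := by
          rw [hl_def]
          field_simp
          ring
        have h2 : (1 - l) * u x = (1 - l) * ((u a - u b) / (u' a - u' b) * u' x +
            (u b - (u a - u b) / (u' a - u' b) * u' b)) := by
          rw [hid]; linarith
        exact mul_left_cancel₀ (ne_of_gt h1l) h2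
    · -- u' a < u' x
      set l : ℝ := (u' a - u' b) / (u' x - u' b) with hl_def
      have he : (0:ℝ) < u' x - u' b := by linarith
      have hl0 : (0:ℝ) < l := div_pos hd he
      have hl : l ∈ Set.Icc (0:ℝ) 1 :=
        ⟨hl0.le, (div_le_one he).mpr (by linarith)⟩
      have hy' : u' (M.mix x l b) = u' a := by
        rw [hul' x b l hl, hl_def]
        field_simp
        ring
      have hy : u (M.mix x l b) = u a := keyeq _ _ hy'
      rw [hul x b l hl] at hy
      have hid : l * ((u a - u b) / (u' a - u' b) * u' x +
          (u b - (u a - u b) / (u' a - u' b) * u' b)) = u a - (1 - l) * u b := by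
        rw [hl_def]
        field_simp
        ring
      have h2 : l * u x = l * ((u a - u b) / (u' a - u' b) * u' x +
          (u b - (u a - u b) / (u' a - u' b) * u' b)) := by
        rw [hid]; linarith
      exact mul_left_cancel₀ (ne_of_gt hl0) h2
  · -- Part 2 : weights
    refine ⟨(∑ t, w t) / (∑ t, w' t), div_pos hW hW', ?_⟩
    intro t
    have main : ∀ c : ℝ, 0 ≤ c → c ≤ 1 →
        ((w t ≥ c * ∑ s, w s) ↔ (w' t ≥ c * ∑ s, w' s)) := by
      intro c hc0 hc1
      set x : Fin n → X := Function.update (fun _ => b) t a with hx_def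
      set y : Fin n → X := fun _ => M.mix a c b with hy_def
      have hgen : ∀ (v : Fin n → ℝ) (f : X → ℝ), M.linear f →
          (∑ s, v s * f (x s) = (∑ s, v s) * f b + v t * (f a - f b)) ∧
          (∑ s, v s * f (y s) = (∑ s, v s) * (c * f a + (1 - c) * f b)) := by
        intro v f hf
        constructor
        · have hterm : ∀ s : Fin n, v s * f (x s)
              = v s * f b + (if s = t then v t * (f a - f b) else 0) := by
            intro s
            by_cases hs : s = t
            · subst hs; simp [hx_def]; ring
            · simp [hx_def, Function.update_of_ne hs, hs]
          rw [Finset.sum_congr rfl (fun s _ => hterm s), Finset.sum_add_distrib,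
            Finset.sum_ite_eq' Finset.univ t, Finset.sum_mul]
          simp
        · have hterm : ∀ s : Fin n, v s * f (y s)
              = v s * (c * f a + (1 - c) * f b) := by
            intro s
            rw [hy_def]
            simp [hf a b c ⟨hc0, hc1⟩]
          rw [Finset.sum_congr rfl (fun s _ => hterm s), ← Finset.sum_mul]
      obtain ⟨hsx, hsy⟩ := hgen w u hul
      obtain ⟨hsx', hsy'⟩ := hgen w' u' hul'
      have e1 : (w t ≥ c * ∑ s, w s) ↔ R x y := by
        rw [hrep x y, hsx, hsy]
        constructor
        · intro hge
          nlinarith [mul_nonneg (sub_nonneg.mpr hge) (sub_nonneg.mpr hab.le)]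
        · intro hge
          by_contra hlt
          push_neg at hlt
          nlinarith [mul_pos (sub_pos.mpr hlt) (sub_pos.mpr hab)]
      have e2 : (w' t ≥ c * ∑ s, w' s) ↔ R x y := by
        rw [hrep' x y, hsx', hsy']
        constructor
        · intro hge
          nlinarith [mul_nonneg (sub_nonneg.mpr hge) (sub_nonneg.mpr hab'.le)]
        · intro hge
          by_contra hlt
          push_neg at hlt
          nlinarith [mul_pos (sub_pos.mpr hlt) (sub_pos.mpr hab')]
      exact e1.trans e2.symm
    have hc1 : w' t / (∑ s, w' s) ≤ 1 :=
      (div_le_one hW').mpr (Finset.single_le_sum (fun s _ => hwn' s) (Finset.mem_univ t))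
    have hc2 : w t / (∑ s, w s) ≤ 1 :=
      (div_le_one hW).mpr (Finset.single_le_sum (fun s _ => hwn s) (Finset.mem_univ t))
    have h1 : w t ≥ (w' t / ∑ s, w' s) * ∑ s, w s := by
      refine (main _ (div_nonneg (hwn' t) hW'.le) hc1).mpr ?_
      rw [div_mul_cancel₀ _ hW'.ne']
    have h2 : w' t ≥ (w t / ∑ s, w s) * ∑ s, w' s := by
      refine (main _ (div_nonneg (hwn t) hW.le) hc2).mp ?_
      rw [div_mul_cancel₀ _ hW.ne']
    have hA : w' t * (∑ s, w s) ≤ w t * (∑ s, w' s) := by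
      rw [div_mul_eq_mul_div] at h1
      exact (div_le_iff₀ hW').mp h1
    have hB : w t * (∑ s, w' s) ≤ w' t * (∑ s, w s) := by
      rw [div_mul_eq_mul_div] at h2
      exact (div_le_iff₀ hW).mp h2
    rw [div_mul_eq_mul_div, eq_div_iff hW'.ne']
    linarith
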